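/- For every α with 0 < α < 1 and every p with v_l/2 ≤ p ≤ v_h/2, the profile in which both agents bid p with certainty is a strict Nash equilibrium of the α-auction: each agent's bid p is her unique best response to the other agent bidding p. -/
import Mathlib


open Finset

/-- Payoff to the low-valuation agent in the α-auction when she bids `b` and the
high-valuation agent bids `r` (ties won by the high-valuation agent). -/
noncomputable def UlA (vl : ℕ) (α : ℝ) (b r : ℕ) : ℝ :=
  if r < b then (vl : ℝ) - (α * b + (1 - α) * r) else α * r + (1 - α) * b

/-- Payoff to the high-valuation agent in the α-auction when she bids `b` and the
low-valuation agent bids `r` (ties won by the high-valuation agent). -/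
noncomputable def UhA (vh : ℕ) (α : ℝ) (b r : ℕ) : ℝ :=
  if r ≤ b then (vh : ℝ) - (α * b + (1 - α) * r) else α * r + (1 - α) * b

/-- For every interior `α` and every `p` in the Nash range `{cl,...,ch}`, both agents
bidding `p` is a strict Nash equilibrium of the α-auction: against the opponent bidding `p`,
any other bid yields strictly lower payoff than bidding `p`. -/
theorem stmt3 (pbar vl vh cl ch : ℕ) (hvl : vl = 2 * cl) (hvh : vh = 2 * ch)
    (hcl : 0 < cl) (hclch : cl < ch) (hpbar : ch ≤ pbar)
    (α : ℝ) (hα0 : 0 < α) (hα1 : α < 1)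
    (p : ℕ) (hp1 : cl ≤ p) (hp2 : p ≤ ch) :
    (∀ b ≤ pbar, b ≠ p → UlA vl α b p < UlA vl α p p) ∧
    (∀ b ≤ pbar, b ≠ p → UhA vh α b p < UhA vh α p p) := by
  have hvl2 : (vl : ℝ) = 2 * cl := by exact_mod_cast congrArg Nat.cast hvl
  have hvh2 : (vh : ℝ) = 2 * ch := by exact_mod_cast congrArg Nat.cast hvh
  have hp1' : (cl : ℝ) ≤ p := by exact_mod_cast hp1
  have hp2' : (p : ℝ) ≤ ch := by exact_mod_cast hp2
  constructor
  · intro b hb hbne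
    rcases lt_or_gt_of_ne hbne with h | h
    · have hb' : (b : ℝ) < p := by exact_mod_cast h
      simp only [UlA, if_neg (lt_irrefl p), if_neg (not_lt.2 h.le)]
      nlinarith
    · have hb' : (p : ℝ) < b := by exact_mod_cast h
      simp only [UlA, if_neg (lt_irrefl p), if_pos h]
      nlinarith
  · intro b hb hbne
    rcases lt_or_gt_of_ne hbne with h | h
    · have hb' : (b : ℝ) < p := by exact_mod_cast h
      simp only [UhA, if_pos (le_refl p), if_neg (not_le.2 h)]
      nlinarith
    · have hb' : (p : ℝ) < b := by exact_mod_cast h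
      simp only [UhA, if_pos (le_refl p), if_pos h.le]
      nlinarith
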